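/- The set Γ₁ is open in Q_θ, its subspace topology is Hausdorff, and Γ₁ is the largest such subset: every open subset U ⊆ Q_θ whose subspace topology is Hausdorff satisfies U ⊆ Γ₁. -/

import Mathlib

open Filter Topology

/-- The equivalence relation `∼` on `ℂ² × ℝ`: `((z₁,z₂),τ) ∼ ((w₁,w₂),σ)` iff
`|z₁| = |w₁|`, `|z₂| = |w₂|`, and moreover `τ - σ ∈ ℤ` when `z₁ ≠ 0 = z₂`,
`τ - σ ∈ θℤ` when `z₁ = 0 ≠ z₂`, and `τ = σ` when `z₁ = z₂ = 0`. -/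
def mrel (θ : ℝ) (p q : (ℂ × ℂ) × ℝ) : Prop :=
  ‖p.1.1‖ = ‖q.1.1‖ ∧
  ‖p.1.2‖ = ‖q.1.2‖ ∧
  (p.1.1 ≠ 0 ∧ p.1.2 = 0 → ∃ k : ℤ, p.2 - q.2 = (k : ℝ)) ∧
  (p.1.1 = 0 ∧ p.1.2 ≠ 0 → ∃ k : ℤ, p.2 - q.2 = θ * (k : ℝ)) ∧
  (p.1.1 = 0 ∧ p.1.2 = 0 → p.2 = q.2)

theorem mrel_equivalence (θ : ℝ) : Equivalence (mrel θ) := by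
  constructor
  · exact fun p => ⟨rfl, rfl, fun _ => ⟨0, by simp⟩, fun _ => ⟨0, by simp⟩, fun _ => rfl⟩
  · rintro p q ⟨h1, h2, h3, h4, h5⟩
    have key : ∀ a b : ℂ, ‖a‖ = ‖b‖ → (a = 0 ↔ b = 0) := by
      intro a b h
      rw [← norm_eq_zero, h, norm_eq_zero]
    have e1 : p.1.1 = 0 ↔ q.1.1 = 0 := key _ _ h1
    have e2 : p.1.2 = 0 ↔ q.1.2 = 0 := key _ _ h2
    refine ⟨h1.symm, h2.symm, ?_, ?_, ?_⟩
    · rintro ⟨hq1, hq2⟩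
      obtain ⟨k, hk⟩ := h3 ⟨fun h => hq1 (e1.mp h), e2.mpr hq2⟩
      exact ⟨-k, by push_cast; linarith⟩
    · rintro ⟨hq1, hq2⟩
      obtain ⟨k, hk⟩ := h4 ⟨e1.mpr hq1, fun h => hq2 (e2.mp h)⟩
      exact ⟨-k, by push_cast; linarith⟩
    · rintro ⟨hq1, hq2⟩
      exact (h5 ⟨e1.mpr hq1, e2.mpr hq2⟩).symm
  · rintro p q r ⟨h1, h2, h3, h4, h5⟩ ⟨g1, g2, g3, g4, g5⟩
    have key : ∀ a b : ℂ, ‖a‖ = ‖b‖ → (a = 0 ↔ b = 0) := by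
      intro a b h
      rw [← norm_eq_zero, h, norm_eq_zero]
    have e1 : p.1.1 = 0 ↔ q.1.1 = 0 := key _ _ h1
    have e2 : p.1.2 = 0 ↔ q.1.2 = 0 := key _ _ h2
    refine ⟨h1.trans g1, h2.trans g2, ?_, ?_, ?_⟩
    · rintro ⟨hp1, hp2⟩
      obtain ⟨k, hk⟩ := h3 ⟨hp1, hp2⟩
      obtain ⟨l, hl⟩ := g3 ⟨fun h => hp1 (e1.mpr h), e2.mp hp2⟩
      exact ⟨k + l, by push_cast; linarith⟩
    · rintro ⟨hp1, hp2⟩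
      obtain ⟨k, hk⟩ := h4 ⟨hp1, hp2⟩
      obtain ⟨l, hl⟩ := g4 ⟨e1.mp hp1, fun h => hp2 (e2.mpr h)⟩
      refine ⟨k + l, by push_cast; linarith [mul_add θ (k : ℝ) (l : ℝ)]⟩
    · rintro ⟨hp1, hp2⟩
      exact (h5 ⟨hp1, hp2⟩).trans (g5 ⟨e1.mp hp1, e2.mp hp2⟩)

/-- The setoid on `ℂ² × ℝ` given by the relation `∼`. -/
def mSetoid (θ : ℝ) : Setoid ((ℂ × ℂ) × ℝ) := ⟨mrel θ, mrel_equivalence θ⟩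

/-- The quotient space `Q_θ = (ℂ² × ℝ)/∼`, with the quotient topology. -/
abbrev Qspace (θ : ℝ) : Type := Quotient (mSetoid θ)

/-- The quotient map `q : ℂ² × ℝ → Q_θ`. -/
def qmap (θ : ℝ) : (ℂ × ℂ) × ℝ → Qspace θ := Quotient.mk (mSetoid θ)


/-- `Γ₁ = q({((z₁,z₂),τ) : z₁ ≠ 0 and z₂ ≠ 0})`. -/
def Gamma1 (θ : ℝ) : Set (Qspace θ) := qmap θ '' {p | p.1.1 ≠ 0 ∧ p.1.2 ≠ 0}

/-- `Γ₂' = q({((z₁,z₂),τ) : z₁ ≠ 0 = z₂})`. -/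
def Gamma2' (θ : ℝ) : Set (Qspace θ) := qmap θ '' {p | p.1.1 ≠ 0 ∧ p.1.2 = 0}

/-- `Γ₂'' = q({((z₁,z₂),τ) : z₁ = 0 ≠ z₂})`. -/
def Gamma2'' (θ : ℝ) : Set (Qspace θ) := qmap θ '' {p | p.1.1 = 0 ∧ p.1.2 ≠ 0}

/-- `Γ₂ = Γ₂' ∪ Γ₂''`. -/
def Gamma2 (θ : ℝ) : Set (Qspace θ) := Gamma2' θ ∪ Gamma2'' θ

/-- `Γ₃ = q({((0,0),τ) : τ ∈ ℝ})`. -/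
def Gamma3 (θ : ℝ) : Set (Qspace θ) := qmap θ '' {p | p.1.1 = 0 ∧ p.1.2 = 0}

section Aux
variable (θ : ℝ)

lemma qmap_continuous : Continuous (qmap θ) := continuous_quot_mk

lemma mem_Gamma1_iff {p : (ℂ × ℂ) × ℝ} :
    qmap θ p ∈ Gamma1 θ ↔ (p.1.1 ≠ 0 ∧ p.1.2 ≠ 0) := by
  constructor
  · rintro ⟨p', ⟨h1, h2⟩, hq⟩
    have h : mrel θ p' p := Quotient.exact hq
    constructor
    · intro h0
      apply h1
      rw [← norm_eq_zero, h.1, h0, norm_zero]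
    · intro h0
      apply h2
      rw [← norm_eq_zero, h.2.1, h0, norm_zero]
  · intro h
    exact ⟨p, h, rfl⟩

lemma preimage_Gamma1 : qmap θ ⁻¹' Gamma1 θ = {p | p.1.1 ≠ 0 ∧ p.1.2 ≠ 0} := by
  ext p
  exact mem_Gamma1_iff θ

lemma isOpen_Gamma1 : IsOpen (Gamma1 θ) := by
  have : IsOpen (qmap θ ⁻¹' Gamma1 θ) := by
    rw [preimage_Gamma1]
    exact (isOpen_compl_singleton.preimage (continuous_fst.fst)).inter
      (isOpen_compl_singleton.preimage (continuous_fst.snd))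
  exact isOpen_coinduced.mpr this

/-- Absolute-value pair map, descended to the quotient. -/
noncomputable def absPair : Qspace θ → ℝ × ℝ :=
  Quotient.lift (fun p => (‖p.1.1‖, ‖p.1.2‖))
    (fun a b h => Prod.ext h.1 h.2.1)

lemma absPair_continuous : Continuous (absPair θ) :=
  Continuous.quotient_lift
    ((continuous_norm.comp continuous_fst.fst).prodMk
      (continuous_norm.comp continuous_fst.snd)) _

lemma t2_Gamma1 : T2Space (Gamma1 θ) := by
  apply T2Space.of_injective_continuous
    (f := fun x : Gamma1 θ => absPair θ x.val)
  · rintro ⟨x, hx⟩ ⟨y, hy⟩ hxy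
    obtain ⟨p, hp, rfl⟩ := hx
    obtain ⟨p', hp', rfl⟩ := hy
    apply Subtype.ext
    apply Quotient.sound
    have h1 : ‖p.1.1‖ = ‖p'.1.1‖ := congrArg Prod.fst hxy
    have h2 : ‖p.1.2‖ = ‖p'.1.2‖ := congrArg Prod.snd hxy
    exact ⟨h1, h2, fun h => absurd h.2 hp.2, fun h => absurd h.1 hp.1,
      fun h => absurd h.1 hp.1⟩
  · exact (absPair_continuous θ).comp continuous_subtype_val

end Aux

lemma unique_lim_of_t2_open {X : Type*} [TopologicalSpace X] {U : Set X} (hU : IsOpen U)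
    (hT2 : T2Space U) {x y : X} (hx : x ∈ U) (hy : y ∈ U)
    {f : ℕ → X} (hfx : Tendsto f atTop (𝓝 x)) (hfy : Tendsto f atTop (𝓝 y)) :
    x = y := by
  by_contra hxy
  have hne : (⟨x, hx⟩ : U) ≠ ⟨y, hy⟩ := fun h => hxy (congrArg Subtype.val h)
  obtain ⟨V, W, hV, hW, hxV, hyW, hVW⟩ := t2_separation hne
  obtain ⟨V', hV', rfl⟩ := isOpen_induced_iff.mp hV
  obtain ⟨W', hW', rfl⟩ := isOpen_induced_iff.mp hW
  have h1 : ∀ᶠ n in atTop, f n ∈ V' := hfx (hV'.mem_nhds hxV)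
  have h2 : ∀ᶠ n in atTop, f n ∈ W' := hfy (hW'.mem_nhds hyW)
  have h3 : ∀ᶠ n in atTop, f n ∈ U := hfx (hU.mem_nhds hx)
  obtain ⟨n, hn1, hn2, hn3⟩ := (h1.and (h2.and h3)).exists
  exact Set.disjoint_left.mp hVW
    (show (⟨f n, hn3⟩ : U) ∈ Subtype.val ⁻¹' V' from hn1)
    (show (⟨f n, hn3⟩ : U) ∈ Subtype.val ⁻¹' W' from hn2)

/-- perturbation: replace zero coordinates by `1/(n+1)` and set time `t`. -/
noncomputable def pert (p : (ℂ × ℂ) × ℝ) (n : ℕ) (t : ℝ) : (ℂ × ℂ) × ℝ :=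
  ((if p.1.1 = 0 then (((n : ℝ) + 1)⁻¹ : ℂ) else p.1.1,
    if p.1.2 = 0 then (((n : ℝ) + 1)⁻¹ : ℂ) else p.1.2), t)

lemma pert_ne (p : (ℂ × ℂ) × ℝ) (n : ℕ) (t : ℝ) :
    (pert p n t).1.1 ≠ 0 ∧ (pert p n t).1.2 ≠ 0 := by
  have hr : ((n : ℝ) + 1) ≠ 0 := by positivity
  have hn : (((n : ℝ) + 1)⁻¹ : ℂ) ≠ 0 := by
    simp only [ne_eq, inv_eq_zero]
    exact_mod_cast hr
  constructor <;> · simp only [pert]; split <;> simp_all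

lemma pert_qeq (θ : ℝ) (p : (ℂ × ℂ) × ℝ) (n : ℕ) (t s : ℝ) :
    qmap θ (pert p n t) = qmap θ (pert p n s) := by
  apply Quotient.sound
  refine ⟨rfl, rfl, ?_, ?_, ?_⟩
  · intro h; exact absurd h.2 (pert_ne p n t).2
  · intro h; exact absurd h.1 (pert_ne p n t).1
  · intro h; exact absurd h.1 (pert_ne p n t).1

lemma pert_tendsto (p : (ℂ × ℂ) × ℝ) (t : ℝ) :
    Tendsto (fun n => pert p n t) atTop (𝓝 ((p.1.1, p.1.2), t)) := by
  have hinv : Tendsto (fun n : ℕ => (((n : ℝ) + 1)⁻¹ : ℂ)) atTop (𝓝 0) := by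
    have h1 : Tendsto (fun n : ℕ => (((n : ℝ) + 1)⁻¹ : ℝ)) atTop (𝓝 0) := by
      simpa [one_div] using tendsto_one_div_add_atTop_nhds_zero_nat (𝕜 := ℝ)
    have h2 := (Complex.continuous_ofReal.tendsto 0).comp h1
    simpa [Function.comp_def, Complex.ofReal_inv] using h2
  refine Tendsto.prodMk_nhds (Tendsto.prodMk_nhds ?_ ?_) tendsto_const_nhds
  · by_cases h : p.1.1 = 0
    · simp only [pert, h, if_true]; exact hinv
    · simp only [pert, h, if_false]; exact tendsto_const_nhds
  · by_cases h : p.1.2 = 0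
    · simp only [pert, h, if_true]; exact hinv
    · simp only [pert, h, if_false]; exact tendsto_const_nhds

lemma gamma1_max (θ : ℝ) (hθ : Irrational θ) (U : Set (Qspace θ)) (hU : IsOpen U)
    (hT2 : T2Space U) : U ⊆ Gamma1 θ := by
  intro x hxU
  by_contra hxG
  obtain ⟨p, rfl⟩ := Quotient.exists_rep x
  have hpre : IsOpen (qmap θ ⁻¹' U) := hU.preimage (qmap_continuous θ)
  have hpU : p ∈ qmap θ ⁻¹' U := hxU
  obtain ⟨ε, hε, hball⟩ := Metric.isOpen_iff.mp hpre p hpU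
  have hθ0 : θ ≠ 0 := hθ.ne_zero
  set δ : ℝ := min (ε / 2) (min (1 / 2) (|θ| / 2)) with hδdef
  have hδpos : 0 < δ := by positivity
  have hδε : δ < ε := lt_of_le_of_lt (min_le_left _ _) (by linarith)
  have hδ1 : δ < 1 := lt_of_le_of_lt (le_trans (min_le_right _ _) (min_le_left _ _)) (by norm_num)
  have hδθ : δ < |θ| := lt_of_le_of_lt (le_trans (min_le_right _ _) (min_le_right _ _))
    (by have : 0 < |θ| := abs_pos.mpr hθ0; linarith)
  set p' : (ℂ × ℂ) × ℝ := (p.1, p.2 + δ) with hp'def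
  have hp'U : p' ∈ qmap θ ⁻¹' U := by
    apply hball
    rw [Metric.mem_ball]
    have h2 : p.2 + δ - p.2 = δ := by ring
    have hd : dist p' p = δ := by
      simp [hp'def, Prod.dist_eq, Real.dist_eq, h2, abs_of_pos hδpos,
        max_eq_right hδpos.le]
    rw [hd]; exact hδε
  -- the doubly-converging sequence
  have hxy : qmap θ p = qmap θ p' := by
    refine unique_lim_of_t2_open hU hT2 hxU hp'U
      (f := fun n => qmap θ (pert p n p.2)) ?_ ?_
    · have := ((qmap_continuous θ).tendsto _).comp (pert_tendsto p p.2)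
      exact this
    · have := ((qmap_continuous θ).tendsto _).comp (pert_tendsto p p'.2)
      have heq : (fun n => qmap θ (pert p n p.2)) = fun n => qmap θ (pert p n p'.2) := by
        funext n; exact pert_qeq θ p n _ _
      rw [heq]
      exact this
  have hrel : mrel θ p p' := Quotient.exact hxy
  have hzero : p.1.1 = 0 ∨ p.1.2 = 0 := by
    by_contra h
    push_neg at h
    exact hxG ⟨p, h, rfl⟩
  have hsub : p.2 - p'.2 = -δ := by simp [hp'def]
  rcases hzero with h1 | h2
  · by_cases h2 : p.1.2 = 0
    · -- Γ₃ case
      have := hrel.2.2.2.2 ⟨h1, h2⟩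
      simp only [hp'def] at this
      linarith
    · -- Γ₂'' case
      obtain ⟨k, hk⟩ := hrel.2.2.2.1 ⟨h1, h2⟩
      rw [hsub] at hk
      have hk0 : k ≠ 0 := by
        rintro rfl
        simp at hk
        linarith
      have : |θ| ≤ |θ * (k : ℝ)| := by
        rw [abs_mul]
        have : (1 : ℝ) ≤ |(k : ℝ)| := by
          rw [← Int.cast_abs]
          exact_mod_cast Int.one_le_abs hk0
        nlinarith [abs_nonneg θ]
      rw [← hk, abs_neg, abs_of_pos hδpos] at this
      linarith
  · by_cases h1 : p.1.1 = 0
    · have := hrel.2.2.2.2 ⟨h1, h2⟩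
      simp only [hp'def] at this
      linarith
    · -- Γ₂' case
      obtain ⟨k, hk⟩ := hrel.2.2.1 ⟨h1, h2⟩
      rw [hsub] at hk
      have hk0 : k ≠ 0 := by
        rintro rfl
        simp at hk
        linarith
      have : (1 : ℝ) ≤ |(k : ℝ)| := by
        rw [← Int.cast_abs]
        exact_mod_cast Int.one_le_abs hk0
      rw [← hk, abs_neg, abs_of_pos hδpos] at this
      linarith


/-- `Γ₁` is open in `Q_θ`, its subspace topology is Hausdorff, and it is the largest
such subset: every open `U ⊆ Q_θ` whose subspace topology is Hausdorff satisfies `U ⊆ Γ₁`. -/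
theorem Gamma1_largest_open_hausdorff (θ : ℝ) (hθ : Irrational θ) :
    IsOpen (Gamma1 θ) ∧ T2Space (Gamma1 θ) ∧
      ∀ U : Set (Qspace θ), IsOpen U → T2Space U → U ⊆ Gamma1 θ := by
  exact ⟨isOpen_Gamma1 θ, t2_Gamma1 θ, fun U hU hT2 => gamma1_max θ hθ U hU hT2⟩
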